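/- arXiv:2408.08602 — 5 statements merged into one kernel-verified Lean document; each statement's English description precedes it below -/
import Mathlib

section
/- Under Assumptions A2 and A3a, every trajectory of the discrete-time higher-order SIS map F with x_i(0) ∈ [0,1] for all i satisfies x_i(t) ∈ [0,1] for all i ∈ {1,…,n} and all t ≥ 0; that is, the cube [0,1]^n is positively invariant under F. -/
open Finset Filter

/-- Spectral radius of a real square matrix: the maximum modulus of its complex
eigenvalues (elements of the spectrum of the matrix viewed over `ℂ`). -/
noncomputable def specRad {n : ℕ} (M : Matrix (Fin n) (Fin n) ℝ) : ℝ :=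
  sSup ((fun z => ‖z‖) '' spectrum ℂ (M.map (fun a => (a : ℂ))))

/-- A nonnegative matrix is irreducible: there is no nonempty proper subset `S` of the
index set with `M i j = 0` for all `i ∈ S` and `j ∉ S`. -/
def MatIrred {n : ℕ} (M : Matrix (Fin n) (Fin n) ℝ) : Prop :=
  ∀ S : Set (Fin n), S.Nonempty → S ≠ Set.univ → ∃ i ∈ S, ∃ j, j ∉ S ∧ M i j ≠ 0

/-- A nonnegative `n×n×n` array is irreducible: there is no nonempty proper subset `S`
with `H i j k = 0` for all `i ∈ S` and `j, k ∉ S`. -/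
def TensIrred {n : ℕ} (H : Fin n → Fin n → Fin n → ℝ) : Prop :=
  ∀ S : Set (Fin n), S.Nonempty → S ≠ Set.univ →
    ∃ i ∈ S, ∃ j k, j ∉ S ∧ k ∉ S ∧ H i j k ≠ 0

/-- The discrete-time higher-order SIS map
`F(x)_i = x_i + h(−δ_i x_i + (1−x_i)(Σ_j β_{ij} x_j + Σ_{j,k} β_{ijk} x_j x_k))`. -/
noncomputable def SIS {n : ℕ} (h : ℝ) (δ : Fin n → ℝ) (B : Matrix (Fin n) (Fin n) ℝ)
    (H : Fin n → Fin n → Fin n → ℝ) (x : Fin n → ℝ) : Fin n → ℝ := fun i =>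
  x i + h * (-(δ i * x i) +
    (1 - x i) * ((∑ j, B i j * x j) + ∑ j, ∑ k, H i j k * x j * x k))

/-- `x` is a trajectory of the discrete-time system `x(t+1) = F(x(t))`. -/
def IsTraj {n : ℕ} (F : (Fin n → ℝ) → Fin n → ℝ) (x : ℕ → Fin n → ℝ) : Prop :=
  ∀ t, x (t + 1) = F (x t)

/-- Membership in the cube `[0,1]^n`. -/
def InCube {n : ℕ} (y : Fin n → ℝ) : Prop := ∀ i, y i ∈ Set.Icc (0 : ℝ) 1

/-- Local asymptotic stability (max-norm) of an equilibrium `xb`, for trajectories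
starting in `[0,1]^n`. -/
def LocAsympStable {n : ℕ} (F : (Fin n → ℝ) → Fin n → ℝ) (xb : Fin n → ℝ) : Prop :=
  ∀ ε > 0, ∃ d > 0, ∀ x : ℕ → Fin n → ℝ, IsTraj F x → InCube (x 0) → ‖x 0 - xb‖ < d →
    (∀ t, ‖x t - xb‖ < ε) ∧ Tendsto x atTop (nhds xb)

/-- Instability (max-norm) of an equilibrium `xb`, for trajectories starting in `[0,1]^n`. -/
def Unstable {n : ℕ} (F : (Fin n → ℝ) → Fin n → ℝ) (xb : Fin n → ℝ) : Prop :=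
  ∃ ε > 0, ∀ d > 0, ∃ x : ℕ → Fin n → ℝ, IsTraj F x ∧ InCube (x 0) ∧ ‖x 0 - xb‖ < d ∧
    ∃ t, ε ≤ ‖x t - xb‖

/-- Under Assumptions A2 and A3a, the cube `[0,1]^n` is positively
invariant under the discrete-time higher-order SIS map `F`. -/
theorem stmt0 {n : ℕ} (hn : 2 ≤ n) (h : ℝ) (hh : 0 < h)
    (δ : Fin n → ℝ) (B : Matrix (Fin n) (Fin n) ℝ) (H : Fin n → Fin n → Fin n → ℝ)
    (hδ : ∀ i, 0 < δ i) (hB : ∀ i j, 0 ≤ B i j) (hH : ∀ i j k, 0 ≤ H i j k)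
    (hA2 : MatIrred B)
    (hA3a : ∀ i, h * δ i ≤ 1 ∧ h * ((∑ j, B i j) + ∑ j, ∑ k, H i j k) ≤ 1)
    (x : ℕ → Fin n → ℝ) (hx : IsTraj (SIS h δ B H) x) (h0 : InCube (x 0)) :
    ∀ t, InCube (x t) := by
  intro t
  induction t with
  | zero => exact h0
  | succ t ih =>
    rw [hx t]
    intro i
    have hy0 : ∀ j, 0 ≤ x t j := fun j => (ih j).1
    have hy1 : ∀ j, x t j ≤ 1 := fun j => (ih j).2
    have hS1 : 0 ≤ ∑ j, B i j * x t j :=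
      Finset.sum_nonneg fun j _ => mul_nonneg (hB i j) (hy0 j)
    have hS2 : 0 ≤ ∑ j, ∑ k, H i j k * x t j * x t k :=
      Finset.sum_nonneg fun j _ => Finset.sum_nonneg fun k _ =>
        mul_nonneg (mul_nonneg (hH i j k) (hy0 j)) (hy0 k)
    have hS1' : (∑ j, B i j * x t j) ≤ ∑ j, B i j := by
      apply Finset.sum_le_sum
      intro j _
      nlinarith [hB i j, hy0 j, hy1 j]
    have hS2' : (∑ j, ∑ k, H i j k * x t j * x t k) ≤ ∑ j, ∑ k, H i j k := by
      apply Finset.sum_le_sum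
      intro j _
      apply Finset.sum_le_sum
      intro k _
      calc H i j k * x t j * x t k ≤ H i j k * x t j :=
            mul_le_of_le_one_right (mul_nonneg (hH i j k) (hy0 j)) (hy1 k)
        _ ≤ H i j k := mul_le_of_le_one_right (hH i j k) (hy1 j)
    obtain ⟨ha, hb⟩ := hA3a i
    simp only [SIS]
    constructor
    · nlinarith [hy0 i, hy1 i, hδ i, hS1, hS2, mul_nonneg hh.le (add_nonneg hS1 hS2)]
    · have hhS : h * ((∑ j, B i j * x t j) + ∑ j, ∑ k, H i j k * x t j * x t k) ≤ 1 :=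
        le_trans (by nlinarith) hb
      nlinarith [mul_nonneg (mul_nonneg hh.le (hδ i).le) (hy0 i),
        mul_le_mul_of_nonneg_left hhS (sub_nonneg.2 (hy1 i))]
end

section
/- Under Assumptions A5 and A6a, if (x̄₁, x̄₂) ∈ S is an equilibrium of the bi-virus SIS map G, then for each ℓ ∈ {1,2} either x̄_ℓ = 0 or 0 < x̄_{ℓi} < 1 for all i; moreover x̄_{1i} + x̄_{2i} < 1 for all i. -/
open Finset Filter

/-- The bi-virus discrete-time higher-order SIS map `G`: virus `ℓ ∈ {0,1}` evolves by
`y_{ℓi} = x_{ℓi} + h(−δ_{ℓi} x_{ℓi} + (1 − x_{0i} − x_{1i})(Σ_j β_{ℓ,ij} x_{ℓj}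
+ Σ_{j,k} β_{ℓ,ijk} x_{ℓj} x_{ℓk}))`. -/
noncomputable def biSIS {n : ℕ} (h : ℝ) (δ : Fin 2 → Fin n → ℝ)
    (B : Fin 2 → Matrix (Fin n) (Fin n) ℝ) (H : Fin 2 → Fin n → Fin n → Fin n → ℝ)
    (x : Fin 2 → Fin n → ℝ) : Fin 2 → Fin n → ℝ := fun ℓ i =>
  x ℓ i + h * (-(δ ℓ i * x ℓ i) + (1 - x 0 i - x 1 i) *
    ((∑ j, B ℓ i j * x ℓ j) + ∑ j, ∑ k, H ℓ i j k * x ℓ j * x ℓ k))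

/-- `x` is a trajectory of the discrete-time system `x(t+1) = G(x(t))`. -/
def IsTraj2 {n : ℕ} (G : (Fin 2 → Fin n → ℝ) → Fin 2 → Fin n → ℝ)
    (x : ℕ → Fin 2 → Fin n → ℝ) : Prop := ∀ t, x (t + 1) = G (x t)

/-- The simplex-like invariant set
`S = {(x₁,x₂) : x_{ℓi} ≥ 0, x_{1i} + x_{2i} ≤ 1}`. -/
def InS {n : ℕ} (x : Fin 2 → Fin n → ℝ) : Prop :=
  (∀ ℓ i, 0 ≤ x ℓ i) ∧ ∀ i, x 0 i + x 1 i ≤ 1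

/-- Local asymptotic stability (max-norm) of an equilibrium `p` of the bi-virus map,
for trajectories starting in `S`. -/
def LocAsympStable2 {n : ℕ} (G : (Fin 2 → Fin n → ℝ) → Fin 2 → Fin n → ℝ)
    (p : Fin 2 → Fin n → ℝ) : Prop :=
  ∀ ε > 0, ∃ d > 0, ∀ x : ℕ → Fin 2 → Fin n → ℝ, IsTraj2 G x → InS (x 0) →
    ‖x 0 - p‖ < d → (∀ t, ‖x t - p‖ < ε) ∧ Tendsto x atTop (nhds p)

/-- Instability (max-norm) of an equilibrium `p` of the bi-virus map, for trajectories
starting in `S`. -/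
def Unstable2 {n : ℕ} (G : (Fin 2 → Fin n → ℝ) → Fin 2 → Fin n → ℝ)
    (p : Fin 2 → Fin n → ℝ) : Prop :=
  ∃ ε > 0, ∀ d > 0, ∃ x : ℕ → Fin 2 → Fin n → ℝ, IsTraj2 G x ∧ InS (x 0) ∧
    ‖x 0 - p‖ < d ∧ ∃ t, ε ≤ ‖x t - p‖

/-- under Assumptions A5 and A6a, for any equilibrium `(x̄₁,x̄₂) ∈ S` of
the bi-virus SIS map, for each `ℓ` either `x̄_ℓ = 0` or `0 < x̄_{ℓi} < 1` for all `i`;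
moreover `x̄_{1i} + x̄_{2i} < 1` for all `i`. -/
theorem stmt9 {n : ℕ} (hn : 2 ≤ n) (h : ℝ) (hh : 0 < h)
    (δ : Fin 2 → Fin n → ℝ) (B : Fin 2 → Matrix (Fin n) (Fin n) ℝ)
    (H : Fin 2 → Fin n → Fin n → Fin n → ℝ)
    (hδ : ∀ ℓ i, 0 < δ ℓ i) (hB : ∀ ℓ i j, 0 ≤ B ℓ i j) (hH : ∀ ℓ i j k, 0 ≤ H ℓ i j k)
    (hA5 : ∀ ℓ, MatIrred (B ℓ))
    (hA6a : ∀ ℓ i, h * δ ℓ i ≤ 1 ∧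
      h * (∑ l, ((∑ j, B l i j) + ∑ j, ∑ k, H l i j k)) ≤ 1)
    (xb : Fin 2 → Fin n → ℝ) (hS : InS xb) (heq : biSIS h δ B H xb = xb) :
    (∀ ℓ, xb ℓ = 0 ∨ ∀ i, 0 < xb ℓ i ∧ xb ℓ i < 1) ∧
    ∀ i, xb 0 i + xb 1 i < 1 := by
  obtain ⟨hnn, hsum⟩ := hS
  have key : ∀ ℓ i, δ ℓ i * xb ℓ i = (1 - xb 0 i - xb 1 i) *
      ((∑ j, B ℓ i j * xb ℓ j) + ∑ j, ∑ k, H ℓ i j k * xb ℓ j * xb ℓ k) := by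
    intro ℓ i
    have h0 := congrFun (congrFun heq ℓ) i
    simp only [biSIS] at h0
    have h1 : h * (-(δ ℓ i * xb ℓ i) + (1 - xb 0 i - xb 1 i) *
        ((∑ j, B ℓ i j * xb ℓ j) + ∑ j, ∑ k, H ℓ i j k * xb ℓ j * xb ℓ k)) = 0 := by
      linarith
    have h2 := (mul_eq_zero.mp h1).resolve_left (ne_of_gt hh)
    linarith
  have hlt : ∀ i, xb 0 i + xb 1 i < 1 := by
    intro i
    by_contra hc
    have hs1 : xb 0 i + xb 1 i = 1 := le_antisymm (hsum i) (not_lt.mp hc)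
    have hz : ∀ ℓ : Fin 2, xb ℓ i = 0 := by
      intro ℓ
      have hk := key ℓ i
      rw [show (1 - xb 0 i - xb 1 i) = 0 by linarith, zero_mul] at hk
      exact (mul_eq_zero.mp hk).resolve_left (ne_of_gt (hδ ℓ i))
    have := hz 0; have := hz 1; linarith
  have hpos : ∀ ℓ, xb ℓ = 0 ∨ ∀ i, 0 < xb ℓ i := by
    intro ℓ
    by_cases hall : ∀ i, 0 < xb ℓ i
    · exact Or.inr hall
    · left
      push_neg at hall
      obtain ⟨i0, hi0⟩ := hall
      have hi0' : xb ℓ i0 = 0 := le_antisymm hi0 (hnn ℓ i0)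
      funext i
      simp only [Pi.zero_apply]
      by_contra hji
      set Z : Set (Fin n) := {i | xb ℓ i = 0} with hZdef
      have hZne : Z.Nonempty := ⟨i0, hi0'⟩
      have hZnu : Z ≠ Set.univ := by
        intro hu
        exact hji (by have : i ∈ Z := hu ▸ Set.mem_univ i; exact this)
      obtain ⟨a, haZ, b, hbZ, hBab⟩ := hA5 ℓ Z hZne hZnu
      have haZ' : xb ℓ a = 0 := haZ
      have hbZ' : xb ℓ b ≠ 0 := hbZ
      have hb0 : 0 < xb ℓ b := lt_of_le_of_ne (hnn ℓ b) (Ne.symm hbZ')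
      have hsa : 0 < 1 - xb 0 a - xb 1 a := by have := hlt a; linarith
      have hk := key ℓ a
      rw [haZ', mul_zero] at hk
      have hFa : (∑ j, B ℓ a j * xb ℓ j) + ∑ j, ∑ k, H ℓ a j k * xb ℓ j * xb ℓ k = 0 :=
        ((mul_eq_zero.mp hk.symm).resolve_left (ne_of_gt hsa))
      have h1 : 0 < ∑ j, B ℓ a j * xb ℓ j :=
        Finset.sum_pos' (fun j _ => mul_nonneg (hB ℓ a j) (hnn ℓ j))
          ⟨b, Finset.mem_univ b,
            mul_pos (lt_of_le_of_ne (hB ℓ a b) (Ne.symm hBab)) hb0⟩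
      have h2 : 0 ≤ ∑ j, ∑ k, H ℓ a j k * xb ℓ j * xb ℓ k :=
        Finset.sum_nonneg fun j _ => Finset.sum_nonneg fun k _ =>
          mul_nonneg (mul_nonneg (hH ℓ a j k) (hnn ℓ j)) (hnn ℓ k)
      linarith
  refine ⟨fun ℓ => ?_, hlt⟩
  rcases hpos ℓ with h0 | hp
  · exact Or.inl h0
  · refine Or.inr fun i => ⟨hp i, ?_⟩
    have hl := hlt i
    fin_cases ℓ
    · show xb 0 i < 1
      have := hnn 1 i; linarith
    · show xb 1 i < 1
      have := hnn 0 i; linarith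
end

section
/- Under Assumptions A5 and A6a, suppose both arrays H₁ and H₂ are irreducible. (a) If Σ_j β_{ℓ,ij} < δ_{ℓi} < Σ_j β_{ℓ,ij} + Σ_{j,k} β_{ℓ,ijk} for all i and both ℓ, then the healthy state (0,0) is locally asymptotically stable and every trajectory starting in S with max_i |x_{ℓi}(0)| < min_i (δ_{ℓi} − Σ_j β_{ℓ,ij})/(Σ_{j,k} β_{ℓ,ijk}) for each ℓ = 1,2 converges to (0,0). (b) If δ_{ℓi} > Σ_j β_{ℓ,ij} + Σ_{j,k} β_{ℓ,ijk} for all i and both ℓ, then (0,0) is globally asymptotically stable on S: every trajectory starting in S converges to (0,0). -/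
open Finset Filter

lemma InS.le_one' {n : ℕ} {x : Fin 2 → Fin n → ℝ} (hx : InS x) (ℓ : Fin 2) (j : Fin n) :
    x ℓ j ≤ 1 := by
  have h2 := hx.2 j
  have h0 := hx.1 0 j
  have h1 := hx.1 1 j
  fin_cases ℓ <;> simp <;> linarith

lemma invS {n : ℕ} (h : ℝ) (hh : 0 < h) (δ : Fin 2 → Fin n → ℝ)
    (B : Fin 2 → Matrix (Fin n) (Fin n) ℝ) (H : Fin 2 → Fin n → Fin n → Fin n → ℝ)
    (hδ : ∀ ℓ i, 0 < δ ℓ i) (hB : ∀ ℓ i j, 0 ≤ B ℓ i j) (hH : ∀ ℓ i j k, 0 ≤ H ℓ i j k)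
    (hA6a : ∀ ℓ i, h * δ ℓ i ≤ 1 ∧
      h * (∑ l, ((∑ j, B l i j) + ∑ j, ∑ k, H l i j k)) ≤ 1)
    (x : Fin 2 → Fin n → ℝ) (hx : InS x) : InS (biSIS h δ B H x) := by
  have hF0 : ∀ ℓ i, 0 ≤ (∑ j, B ℓ i j * x ℓ j) + ∑ j, ∑ k, H ℓ i j k * x ℓ j * x ℓ k := by
    intro ℓ i
    apply add_nonneg
    · exact Finset.sum_nonneg fun j _ => mul_nonneg (hB ℓ i j) (hx.1 ℓ j)
    · exact Finset.sum_nonneg fun j _ => Finset.sum_nonneg fun k _ =>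
        mul_nonneg (mul_nonneg (hH ℓ i j k) (hx.1 ℓ j)) (hx.1 ℓ k)
  have hFle : ∀ ℓ i, (∑ j, B ℓ i j * x ℓ j) + (∑ j, ∑ k, H ℓ i j k * x ℓ j * x ℓ k)
      ≤ (∑ j, B ℓ i j) + ∑ j, ∑ k, H ℓ i j k := by
    intro ℓ i
    apply add_le_add
    · exact Finset.sum_le_sum fun j _ =>
        mul_le_of_le_one_right (hB ℓ i j) (hx.le_one' ℓ j)
    · refine Finset.sum_le_sum fun j _ => Finset.sum_le_sum fun k _ => ?_
      calc H ℓ i j k * x ℓ j * x ℓ k ≤ H ℓ i j k * x ℓ j * 1 :=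
            mul_le_mul_of_nonneg_left (hx.le_one' ℓ k)
              (mul_nonneg (hH ℓ i j k) (hx.1 ℓ j))
        _ = H ℓ i j k * x ℓ j := by ring
        _ ≤ H ℓ i j k * 1 := mul_le_mul_of_nonneg_left (hx.le_one' ℓ j) (hH ℓ i j k)
        _ = H ℓ i j k := by ring
  have hs : ∀ i, 0 ≤ 1 - x 0 i - x 1 i := fun i => by linarith [hx.2 i]
  constructor
  · intro ℓ i
    have h1 : 0 ≤ 1 - h * δ ℓ i := by linarith [(hA6a ℓ i).1]
    have h2 : 0 ≤ x ℓ i * (1 - h * δ ℓ i) := mul_nonneg (hx.1 ℓ i) h1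
    have h3 : 0 ≤ h * ((1 - x 0 i - x 1 i) *
        ((∑ j, B ℓ i j * x ℓ j) + ∑ j, ∑ k, H ℓ i j k * x ℓ j * x ℓ k)) :=
      mul_nonneg hh.le (mul_nonneg (hs i) (hF0 ℓ i))
    show (0:ℝ) ≤ x ℓ i + h * _
    nlinarith [h2, h3]
  · intro i
    have hT : h * (((∑ j, B 0 i j) + ∑ j, ∑ k, H 0 i j k) +
        ((∑ j, B 1 i j) + ∑ j, ∑ k, H 1 i j k)) ≤ 1 := by
      have := (hA6a 0 i).2
      rwa [Fin.sum_univ_two] at this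
    have key : h * ((1 - x 0 i - x 1 i) *
        (((∑ j, B 0 i j * x 0 j) + ∑ j, ∑ k, H 0 i j k * x 0 j * x 0 k) +
         ((∑ j, B 1 i j * x 1 j) + ∑ j, ∑ k, H 1 i j k * x 1 j * x 1 k)))
        ≤ 1 - x 0 i - x 1 i := by
      have h1 : ((∑ j, B 0 i j * x 0 j) + ∑ j, ∑ k, H 0 i j k * x 0 j * x 0 k) +
          ((∑ j, B 1 i j * x 1 j) + ∑ j, ∑ k, H 1 i j k * x 1 j * x 1 k)
          ≤ ((∑ j, B 0 i j) + ∑ j, ∑ k, H 0 i j k) +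
            ((∑ j, B 1 i j) + ∑ j, ∑ k, H 1 i j k) := add_le_add (hFle 0 i) (hFle 1 i)
      have h2 : 0 ≤ ((∑ j, B 0 i j * x 0 j) + ∑ j, ∑ k, H 0 i j k * x 0 j * x 0 k) +
          ((∑ j, B 1 i j * x 1 j) + ∑ j, ∑ k, H 1 i j k * x 1 j * x 1 k) :=
        add_nonneg (hF0 0 i) (hF0 1 i)
      have k1 := mul_le_mul_of_nonneg_left h1 (mul_nonneg hh.le (hs i))
      have k2 := mul_le_mul_of_nonneg_left hT (hs i)
      nlinarith [k1, k2]
    have p0 : 0 ≤ h * (δ 0 i * x 0 i) :=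
      mul_nonneg hh.le (mul_nonneg (hδ 0 i).le (hx.1 0 i))
    have p1 : 0 ≤ h * (δ 1 i * x 1 i) :=
      mul_nonneg hh.le (mul_nonneg (hδ 1 i).le (hx.1 1 i))
    show x 0 i + h * _ + (x 1 i + h * _) ≤ 1
    nlinarith [key, p0, p1]

lemma stepB {n : ℕ} (h : ℝ) (hh : 0 < h) (δ : Fin 2 → Fin n → ℝ)
    (B : Fin 2 → Matrix (Fin n) (Fin n) ℝ) (H : Fin 2 → Fin n → Fin n → Fin n → ℝ)
    (hB : ∀ ℓ i j, 0 ≤ B ℓ i j) (hH : ∀ ℓ i j k, 0 ≤ H ℓ i j k)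
    (x : Fin 2 → Fin n → ℝ) (hx : InS x) (ℓ : Fin 2) (i : Fin n)
    (hδ1 : h * δ ℓ i ≤ 1) (m : ℝ) (hm0 : 0 ≤ m) (hm : ∀ j, x ℓ j ≤ m) :
    biSIS h δ B H x ℓ i ≤
      m * (1 - h * (δ ℓ i - (∑ j, B ℓ i j) - (∑ j, ∑ k, H ℓ i j k) * m)) := by
  have hs0 : 0 ≤ 1 - x 0 i - x 1 i := by linarith [hx.2 i]
  have hs1 : 1 - x 0 i - x 1 i ≤ 1 := by linarith [hx.1 0 i, hx.1 1 i]
  have hFB : ∑ j, B ℓ i j * x ℓ j ≤ (∑ j, B ℓ i j) * m := by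
    rw [Finset.sum_mul]
    exact Finset.sum_le_sum fun j _ => mul_le_mul_of_nonneg_left (hm j) (hB ℓ i j)
  have hFH : ∑ j, ∑ k, H ℓ i j k * x ℓ j * x ℓ k ≤ (∑ j, ∑ k, H ℓ i j k) * (m * m) := by
    have e : (∑ j, ∑ k, H ℓ i j k) * (m * m) = ∑ j, ∑ k, H ℓ i j k * m * m := by
      rw [Finset.sum_mul]; congr 1; ext j; rw [Finset.sum_mul]; congr 1; ext k; ring
    rw [e]
    refine Finset.sum_le_sum fun j _ => Finset.sum_le_sum fun k _ => ?_
    exact mul_le_mul (mul_le_mul_of_nonneg_left (hm j) (hH ℓ i j k)) (hm k)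
      (hx.1 ℓ k) (mul_nonneg (hH ℓ i j k) hm0)
  have hF0 : 0 ≤ (∑ j, B ℓ i j * x ℓ j) + ∑ j, ∑ k, H ℓ i j k * x ℓ j * x ℓ k :=
    add_nonneg (Finset.sum_nonneg fun j _ => mul_nonneg (hB ℓ i j) (hx.1 ℓ j))
      (Finset.sum_nonneg fun j _ => Finset.sum_nonneg fun k _ =>
        mul_nonneg (mul_nonneg (hH ℓ i j k) (hx.1 ℓ j)) (hx.1 ℓ k))
  have key1 : x ℓ i * (1 - h * δ ℓ i) ≤ m * (1 - h * δ ℓ i) :=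
    mul_le_mul_of_nonneg_right (hm i) (by linarith)
  have key2 : (1 - x 0 i - x 1 i) *
      ((∑ j, B ℓ i j * x ℓ j) + ∑ j, ∑ k, H ℓ i j k * x ℓ j * x ℓ k)
      ≤ (∑ j, B ℓ i j) * m + (∑ j, ∑ k, H ℓ i j k) * (m * m) := by
    calc (1 - x 0 i - x 1 i) * _ ≤ 1 * ((∑ j, B ℓ i j * x ℓ j) +
          ∑ j, ∑ k, H ℓ i j k * x ℓ j * x ℓ k) :=
          mul_le_mul_of_nonneg_right hs1 hF0
      _ = (∑ j, B ℓ i j * x ℓ j) + ∑ j, ∑ k, H ℓ i j k * x ℓ j * x ℓ k := one_mul _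
      _ ≤ _ := add_le_add hFB hFH
  have key3 := mul_le_mul_of_nonneg_left key2 hh.le
  show x ℓ i + h * _ ≤ _
  nlinarith [key1, key3]

lemma master {n : ℕ} (hn : 2 ≤ n) (h : ℝ) (hh : 0 < h) (δ : Fin 2 → Fin n → ℝ)
    (B : Fin 2 → Matrix (Fin n) (Fin n) ℝ) (H : Fin 2 → Fin n → Fin n → Fin n → ℝ)
    (hδ : ∀ ℓ i, 0 < δ ℓ i) (hB : ∀ ℓ i j, 0 ≤ B ℓ i j) (hH : ∀ ℓ i j k, 0 ≤ H ℓ i j k)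
    (hA6a : ∀ ℓ i, h * δ ℓ i ≤ 1 ∧
      h * (∑ l, ((∑ j, B l i j) + ∑ j, ∑ k, H l i j k)) ≤ 1)
    (x : ℕ → Fin 2 → Fin n → ℝ) (hx : IsTraj2 (biSIS h δ B H) x) (hS : InS (x 0))
    (q : Fin 2 → ℝ) (hq0 : ∀ ℓ, 0 < q ℓ)
    (hq : ∀ ℓ i, q ℓ ≤ h * (δ ℓ i - (∑ j, B ℓ i j) - (∑ j, ∑ k, H ℓ i j k) * ‖x 0 ℓ‖)) :
    (∀ t, InS (x t)) ∧ (∀ t ℓ i, x t ℓ i ≤ ‖x 0 ℓ‖) ∧ Tendsto x atTop (nhds 0) := by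
  have i0 : Fin n := ⟨0, by omega⟩
  have hq1 : ∀ ℓ, q ℓ ≤ 1 := by
    intro ℓ
    have h1 := hq ℓ i0
    have h2 := (hA6a ℓ i0).1
    have hBnn : 0 ≤ ∑ j, B ℓ i0 j := Finset.sum_nonneg fun j _ => hB ℓ i0 j
    have hHnn : 0 ≤ (∑ j, ∑ k, H ℓ i0 j k) * ‖x 0 ℓ‖ :=
      mul_nonneg (Finset.sum_nonneg fun j _ => Finset.sum_nonneg fun k _ => hH ℓ i0 j k)
        (norm_nonneg _)
    nlinarith
  have hpow : ∀ ℓ (t : ℕ), (1 - q ℓ) ^ t ≤ 1 := fun ℓ t =>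
    pow_le_one₀ (by linarith [hq1 ℓ]) (by linarith [hq0 ℓ])
  have main : ∀ t, InS (x t) ∧ ∀ ℓ i, x t ℓ i ≤ (1 - q ℓ) ^ t * ‖x 0 ℓ‖ := by
    intro t
    induction t with
    | zero =>
      refine ⟨hS, fun ℓ i => ?_⟩
      simp only [pow_zero, one_mul]
      exact le_trans (le_abs_self _)
        (le_trans (by simp [Real.norm_eq_abs]) (norm_le_pi_norm (x 0 ℓ) i))
    | succ t ih =>
      have hSt1 : InS (x (t + 1)) := by
        rw [hx t]; exact invS h hh δ B H hδ hB hH hA6a (x t) ih.1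
      refine ⟨hSt1, fun ℓ i => ?_⟩
      have hm0 : (0:ℝ) ≤ (1 - q ℓ) ^ t * ‖x 0 ℓ‖ :=
        mul_nonneg (pow_nonneg (by linarith [hq1 ℓ]) _) (norm_nonneg _)
      have hmle : (1 - q ℓ) ^ t * ‖x 0 ℓ‖ ≤ ‖x 0 ℓ‖ :=
        mul_le_of_le_one_left (norm_nonneg _) (hpow ℓ t)
      have hHnn : 0 ≤ ∑ j, ∑ k, H ℓ i j k :=
        Finset.sum_nonneg fun j _ => Finset.sum_nonneg fun k _ => hH ℓ i j k
      have step := stepB h hh δ B H hB hH (x t) ih.1 ℓ i (hA6a ℓ i).1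
        ((1 - q ℓ) ^ t * ‖x 0 ℓ‖) hm0 (ih.2 ℓ)
      rw [hx t]
      refine le_trans step ?_
      have h3 : (∑ j, ∑ k, H ℓ i j k) * ((1 - q ℓ) ^ t * ‖x 0 ℓ‖)
          ≤ (∑ j, ∑ k, H ℓ i j k) * ‖x 0 ℓ‖ := mul_le_mul_of_nonneg_left hmle hHnn
      have h4 := mul_le_mul_of_nonneg_left h3 hh.le
      have h5 : q ℓ ≤ h * (δ ℓ i - (∑ j, B ℓ i j) -
          (∑ j, ∑ k, H ℓ i j k) * ((1 - q ℓ) ^ t * ‖x 0 ℓ‖)) := by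
        have := hq ℓ i
        nlinarith
      calc (1 - q ℓ) ^ t * ‖x 0 ℓ‖ * (1 - h * (δ ℓ i - (∑ j, B ℓ i j) -
            (∑ j, ∑ k, H ℓ i j k) * ((1 - q ℓ) ^ t * ‖x 0 ℓ‖)))
          ≤ (1 - q ℓ) ^ t * ‖x 0 ℓ‖ * (1 - q ℓ) :=
            mul_le_mul_of_nonneg_left (by linarith) hm0
        _ = (1 - q ℓ) ^ (t + 1) * ‖x 0 ℓ‖ := by rw [pow_succ]; ring
  refine ⟨fun t => (main t).1, fun t ℓ i => le_trans ((main t).2 ℓ i)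
    (mul_le_of_le_one_left (norm_nonneg _) (hpow ℓ t)), ?_⟩
  rw [tendsto_pi_nhds]
  intro ℓ
  rw [tendsto_pi_nhds]
  intro i
  simp only [Pi.zero_apply]
  apply squeeze_zero (fun t => (main t).1.1 ℓ i) (fun t => (main t).2 ℓ i)
  have : Tendsto (fun t : ℕ => (1 - q ℓ) ^ t * ‖x 0 ℓ‖) atTop (nhds (0 * ‖x 0 ℓ‖)) :=
    (tendsto_pow_atTop_nhds_zero_of_lt_one (by linarith [hq1 ℓ])
      (by linarith [hq0 ℓ])).mul_const _
  simpa using this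

lemma master' {n : ℕ} (hn : 2 ≤ n) (h : ℝ) (hh : 0 < h) (δ : Fin 2 → Fin n → ℝ)
    (B : Fin 2 → Matrix (Fin n) (Fin n) ℝ) (H : Fin 2 → Fin n → Fin n → Fin n → ℝ)
    (hδ : ∀ ℓ i, 0 < δ ℓ i) (hB : ∀ ℓ i j, 0 ≤ B ℓ i j) (hH : ∀ ℓ i j k, 0 ≤ H ℓ i j k)
    (hA6a : ∀ ℓ i, h * δ ℓ i ≤ 1 ∧
      h * (∑ l, ((∑ j, B l i j) + ∑ j, ∑ k, H l i j k)) ≤ 1)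
    (x : ℕ → Fin 2 → Fin n → ℝ) (hx : IsTraj2 (biSIS h δ B H) x) (hS : InS (x 0))
    (hpos : ∀ ℓ i, 0 < δ ℓ i - (∑ j, B ℓ i j) - (∑ j, ∑ k, H ℓ i j k) * ‖x 0 ℓ‖) :
    (∀ t, InS (x t)) ∧ (∀ t ℓ i, x t ℓ i ≤ ‖x 0 ℓ‖) ∧ Tendsto x atTop (nhds 0) := by
  haveI : Nonempty (Fin n) := ⟨⟨0, by omega⟩⟩
  refine master hn h hh δ B H hδ hB hH hA6a x hx hS
    (fun ℓ => h * (Finset.univ.inf' Finset.univ_nonempty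
      fun i => δ ℓ i - (∑ j, B ℓ i j) - (∑ j, ∑ k, H ℓ i j k) * ‖x 0 ℓ‖)) ?_ ?_
  · intro ℓ
    exact mul_pos hh ((Finset.lt_inf'_iff _).mpr fun i _ => hpos ℓ i)
  · intro ℓ i
    exact mul_le_mul_of_nonneg_left (Finset.inf'_le _ (Finset.mem_univ i)) hh.le

/-- with `H₁, H₂` irreducible, (a) if
`Σ_j β_{ℓ,ij} < δ_{ℓi} < Σ_j β_{ℓ,ij} + Σ_{j,k} β_{ℓ,ijk}` for all `i, ℓ`, the healthy
state `(0,0)` is locally asymptotically stable, with domain of attraction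
`max_i |x_{ℓi}(0)| < min_i (δ_{ℓi} − Σ_j β_{ℓ,ij})/(Σ_{j,k} β_{ℓ,ijk})` for each `ℓ`;
(b) if `δ_{ℓi} > Σ_j β_{ℓ,ij} + Σ_{j,k} β_{ℓ,ijk}` for all `i, ℓ`, then `(0,0)` is
globally asymptotically stable on `S`. -/
theorem stmt11 {n : ℕ} (hn : 2 ≤ n) (h : ℝ) (hh : 0 < h)
    (δ : Fin 2 → Fin n → ℝ) (B : Fin 2 → Matrix (Fin n) (Fin n) ℝ)
    (H : Fin 2 → Fin n → Fin n → Fin n → ℝ)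
    (hδ : ∀ ℓ i, 0 < δ ℓ i) (hB : ∀ ℓ i j, 0 ≤ B ℓ i j) (hH : ∀ ℓ i j k, 0 ≤ H ℓ i j k)
    (hA5 : ∀ ℓ, MatIrred (B ℓ))
    (hA6a : ∀ ℓ i, h * δ ℓ i ≤ 1 ∧
      h * (∑ l, ((∑ j, B l i j) + ∑ j, ∑ k, H l i j k)) ≤ 1)
    (hHirr : ∀ ℓ, TensIrred (H ℓ)) :
    ((∀ ℓ i, (∑ j, B ℓ i j) < δ ℓ i ∧ δ ℓ i < (∑ j, B ℓ i j) + ∑ j, ∑ k, H ℓ i j k) →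
      LocAsympStable2 (biSIS h δ B H) 0 ∧
      ∀ x : ℕ → Fin 2 → Fin n → ℝ, IsTraj2 (biSIS h δ B H) x → InS (x 0) →
        (∀ ℓ, ‖x 0 ℓ‖ < ⨅ i, (δ ℓ i - ∑ j, B ℓ i j) / (∑ j, ∑ k, H ℓ i j k)) →
        Tendsto x atTop (nhds 0)) ∧
    ((∀ ℓ i, (∑ j, B ℓ i j) + (∑ j, ∑ k, H ℓ i j k) < δ ℓ i) →
      LocAsympStable2 (biSIS h δ B H) 0 ∧
      ∀ x : ℕ → Fin 2 → Fin n → ℝ, IsTraj2 (biSIS h δ B H) x → InS (x 0) →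
        Tendsto x atTop (nhds 0)) := by
  haveI : Nonempty (Fin n) := ⟨⟨0, by omega⟩⟩
  haveI : Nontrivial (Fin n) := Fin.nontrivial_iff_two_le.mpr hn
  have hHnn : ∀ ℓ (i : Fin n), 0 ≤ ∑ j, ∑ k, H ℓ i j k := fun ℓ i =>
    Finset.sum_nonneg fun j _ => Finset.sum_nonneg fun k _ => hH ℓ i j k
  have hHpos : ∀ ℓ (i : Fin n), 0 < ∑ j, ∑ k, H ℓ i j k := by
    intro ℓ i
    obtain ⟨j0, hj0⟩ := exists_ne i
    have hne : ({i} : Set (Fin n)) ≠ Set.univ := by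
      rw [Set.ne_univ_iff_exists_notMem]
      exact ⟨j0, by simp [hj0]⟩
    obtain ⟨i', hi', j, k, hj, hk, hH0⟩ := hHirr ℓ {i} ⟨i, rfl⟩ hne
    have hii : i' = i := hi'
    subst hii
    have hk1 : 0 < H ℓ i' j k := lt_of_le_of_ne (hH ℓ i' j k) (Ne.symm hH0)
    exact Finset.sum_pos' (fun j _ => Finset.sum_nonneg fun k _ => hH ℓ i' j k)
      ⟨j, Finset.mem_univ j,
        Finset.sum_pos' (fun k _ => hH ℓ i' j k) ⟨k, Finset.mem_univ k, hk1⟩⟩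
  constructor
  · -- part (a)
    intro ha
    set c : Fin 2 → ℝ :=
      fun ℓ => ⨅ i, (δ ℓ i - ∑ j, B ℓ i j) / (∑ j, ∑ k, H ℓ i j k) with hc
    have hcpos : ∀ ℓ, 0 < c ℓ := by
      intro ℓ
      obtain ⟨a, hamin⟩ :=
        Finite.exists_min fun i => (δ ℓ i - ∑ j, B ℓ i j) / (∑ j, ∑ k, H ℓ i j k)
      exact lt_of_lt_of_le (div_pos (by linarith [(ha ℓ a).1]) (hHpos ℓ a))
        (le_ciInf hamin)
    have hcle : ∀ ℓ (i : Fin n),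
        c ℓ ≤ (δ ℓ i - ∑ j, B ℓ i j) / (∑ j, ∑ k, H ℓ i j k) := fun ℓ i =>
      ciInf_le (Finite.bddBelow_range _) i
    have hposOf : ∀ (x0 : Fin 2 → Fin n → ℝ), (∀ ℓ, ‖x0 ℓ‖ < c ℓ) →
        ∀ ℓ i, 0 < δ ℓ i - (∑ j, B ℓ i j) - (∑ j, ∑ k, H ℓ i j k) * ‖x0 ℓ‖ := by
      intro x0 hx0 ℓ i
      have h1 : ‖x0 ℓ‖ < (δ ℓ i - ∑ j, B ℓ i j) / (∑ j, ∑ k, H ℓ i j k) :=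
        lt_of_lt_of_le (hx0 ℓ) (hcle ℓ i)
      have h2 := (lt_div_iff₀ (hHpos ℓ i)).mp h1
      nlinarith
    constructor
    · intro ε hε
      refine ⟨min ε (min (c 0) (c 1)), lt_min hε (lt_min (hcpos 0) (hcpos 1)), ?_⟩
      intro x hxT hxS hxd
      rw [sub_zero] at hxd
      have hxn : ∀ ℓ, ‖x 0 ℓ‖ < c ℓ := by
        intro ℓ
        have hcl : min (c 0) (c 1) ≤ c ℓ := by
          fin_cases ℓ <;> simp [min_le_left, min_le_right]
        calc ‖x 0 ℓ‖ ≤ ‖x 0‖ := norm_le_pi_norm _ ℓ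
          _ < min ε (min (c 0) (c 1)) := hxd
          _ ≤ min (c 0) (c 1) := min_le_right _ _
          _ ≤ c ℓ := hcl
      obtain ⟨hSall, hbd, htend⟩ := master' hn h hh δ B H hδ hB hH hA6a x hxT hxS
        (hposOf (x 0) hxn)
      refine ⟨fun t => ?_, htend⟩
      rw [sub_zero, pi_norm_lt_iff hε]
      intro ℓ
      rw [pi_norm_lt_iff hε]
      intro i
      rw [Real.norm_eq_abs, abs_of_nonneg ((hSall t).1 ℓ i)]
      calc x t ℓ i ≤ ‖x 0 ℓ‖ := hbd t ℓ i
        _ ≤ ‖x 0‖ := norm_le_pi_norm _ ℓ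
        _ < min ε (min (c 0) (c 1)) := hxd
        _ ≤ ε := min_le_left _ _
    · intro x hxT hxS hxn
      exact (master' hn h hh δ B H hδ hB hH hA6a x hxT hxS
        (hposOf (x 0) hxn)).2.2
  · -- part (b)
    intro hb
    have hposOf : ∀ (x0 : Fin 2 → Fin n → ℝ), InS x0 →
        ∀ ℓ i, 0 < δ ℓ i - (∑ j, B ℓ i j) - (∑ j, ∑ k, H ℓ i j k) * ‖x0 ℓ‖ := by
      intro x0 hx0 ℓ i
      have hle1 : ‖x0 ℓ‖ ≤ 1 := by
        rw [pi_norm_le_iff_of_nonneg zero_le_one]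
        intro j
        rw [Real.norm_eq_abs, abs_le]
        exact ⟨by linarith [hx0.1 ℓ j], hx0.le_one' ℓ j⟩
      have h2 : (∑ j, ∑ k, H ℓ i j k) * ‖x0 ℓ‖ ≤ (∑ j, ∑ k, H ℓ i j k) * 1 :=
        mul_le_mul_of_nonneg_left hle1 (hHnn ℓ i)
      have h3 := hb ℓ i
      nlinarith
    constructor
    · intro ε hε
      refine ⟨ε, hε, ?_⟩
      intro x hxT hxS hxd
      rw [sub_zero] at hxd
      obtain ⟨hSall, hbd, htend⟩ := master' hn h hh δ B H hδ hB hH hA6a x hxT hxS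
        (hposOf (x 0) hxS)
      refine ⟨fun t => ?_, htend⟩
      rw [sub_zero, pi_norm_lt_iff hε]
      intro ℓ
      rw [pi_norm_lt_iff hε]
      intro i
      rw [Real.norm_eq_abs, abs_of_nonneg ((hSall t).1 ℓ i)]
      calc x t ℓ i ≤ ‖x 0 ℓ‖ := hbd t ℓ i
        _ ≤ ‖x 0‖ := norm_le_pi_norm _ ℓ
        _ < ε := hxd
    · intro x hxT hxS
      exact (master' hn h hh δ B H hδ hB hH hA6a x hxT hxS
        (hposOf (x 0) hxS)).2.2
end

section
/- Under Assumptions A2 and A7a, every trajectory of the general higher-order SIS map F with x_i(0) ∈ [0,1] for all i satisfies x_i(t) ∈ [0,1] for all i ∈ {1,…,n} and all t ≥ 0; that is, [0,1]^n is positively invariant under F. -/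
open Finset Filter

/-- Irreducibility of an order-`k` array `T_k` (entries `β_{i i₁ … i_{k−1}}`,
here `Tk i v` with `v : Fin (k−1) → Fin n` listing the trailing indices): there is no
nonempty proper subset `S` with `Tk i v = 0` for all `i ∈ S` and all trailing indices
outside `S`. -/
def TensIrredK {n : ℕ} (k : ℕ) (Tk : Fin n → (Fin (k - 1) → Fin n) → ℝ) : Prop :=
  ∀ S : Set (Fin n), S.Nonempty → S ≠ Set.univ →
    ∃ i ∈ S, ∃ v : Fin (k - 1) → Fin n, (∀ m, v m ∉ S) ∧ Tk i v ≠ 0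

/-- The general higher-order discrete-time SIS map:
`F(x)_i = x_i + h(−δ_i x_i + (1 − x_i)(Σ_j β_{ij} x_j +
Σ_{k=3}^n Σ_{i₁,…,i_{k−1}} β_{i i₁ … i_{k−1}} x_{i₁} ⋯ x_{i_{k−1}}))`,
where the order-`k` array is `T k` and `T k i v` is the entry with tail `i` and
trailing indices `v : Fin (k−1) → Fin n`. -/
noncomputable def hoSIS {n : ℕ} (h : ℝ) (δ : Fin n → ℝ) (B : Matrix (Fin n) (Fin n) ℝ)
    (T : (k : ℕ) → Fin n → (Fin (k - 1) → Fin n) → ℝ) (x : Fin n → ℝ) : Fin n → ℝ :=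
  fun i => x i + h * (-(δ i * x i) + (1 - x i) * ((∑ j, B i j * x j) +
    ∑ k ∈ Finset.Icc 3 n, ∑ v : Fin (k - 1) → Fin n, T k i v * ∏ m, x (v m)))

/-- under Assumptions A2 and A7a, the cube `[0,1]^n` is positively
invariant under the general higher-order SIS map. -/
theorem stmt15 {n : ℕ} (hn : 3 ≤ n) (h : ℝ) (hh : 0 < h)
    (δ : Fin n → ℝ) (B : Matrix (Fin n) (Fin n) ℝ)
    (T : (k : ℕ) → Fin n → (Fin (k - 1) → Fin n) → ℝ)
    (hδ : ∀ i, 0 < δ i) (hB : ∀ i j, 0 ≤ B i j)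
    (hT : ∀ k ∈ Finset.Icc 3 n, ∀ i, ∀ v : Fin (k - 1) → Fin n, 0 ≤ T k i v)
    (hA2 : MatIrred B)
    (hA7a : ∀ i, h * δ i ≤ 1 ∧
      h * ((∑ j, B i j) + ∑ k ∈ Finset.Icc 3 n, ∑ v : Fin (k - 1) → Fin n, T k i v) ≤ 1)
    (x : ℕ → Fin n → ℝ) (hx : IsTraj (hoSIS h δ B T) x) (h0 : InCube (x 0)) :
    ∀ t, InCube (x t) := by
  intro t
  induction t with
  | zero => exact h0
  | succ t ih =>
    intro i
    rw [hx t]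
    obtain ⟨hxi0, hxi1⟩ := ih i
    -- nonnegativity of the interaction sum S
    set S : ℝ := (∑ j, B i j * x t j) +
      ∑ k ∈ Finset.Icc 3 n, ∑ v : Fin (k - 1) → Fin n, T k i v * ∏ m, x t (v m) with hS
    have hS0 : 0 ≤ S := by
      apply add_nonneg
      · exact Finset.sum_nonneg fun j _ => mul_nonneg (hB i j) (ih j).1
      · exact Finset.sum_nonneg fun k hk => Finset.sum_nonneg fun v _ =>
          mul_nonneg (hT k hk i v) (Finset.prod_nonneg fun m _ => (ih (v m)).1)
    have hSB : S ≤ (∑ j, B i j) +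
        ∑ k ∈ Finset.Icc 3 n, ∑ v : Fin (k - 1) → Fin n, T k i v := by
      apply add_le_add
      · exact Finset.sum_le_sum fun j _ => by
          nlinarith [(ih j).1, (ih j).2, hB i j]
      · refine Finset.sum_le_sum fun k hk => Finset.sum_le_sum fun v _ => ?_
        have hprod : ∏ m, x t (v m) ≤ 1 :=
          Finset.prod_le_one (fun m _ => (ih (v m)).1) (fun m _ => (ih (v m)).2)
        nlinarith [hT k hk i v, Finset.prod_nonneg fun m (_ : m ∈ Finset.univ) => (ih (v m)).1]
    have hhS : h * S ≤ 1 :=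
      le_trans (by nlinarith) (hA7a i).2
    have hd := (hA7a i).1
    have hδi := (hδ i).le
    show x t i + h * (-(δ i * x t i) + (1 - x t i) * S) ∈ Set.Icc (0:ℝ) 1
    constructor
    · nlinarith [mul_nonneg (mul_nonneg hh.le (sub_nonneg.2 hxi1)) hS0]
    · nlinarith [mul_nonneg (mul_nonneg hh.le hδi) hxi0,
        mul_le_of_le_one_right (sub_nonneg.2 hxi1) hhS]
end

section
/- Under Assumptions A2 and A7a, suppose each array F_k (k = 3,…,n) is irreducible (there is no nonempty proper subset N₁ of {1,…,n} with β_{i i₁ … i_{k−1}} = 0 for all i ∈ N₁ and all i₁,…,i_{k−1} ∉ N₁) and δ_i > Σ_j β_{ij} for all i. For each i set c_{i,1} = Σ_j |(I − hD + hB)_{ij}| and c_{i,m} = h Σ_{i₁,…,i_m} β_{i i₁ … i_m} for m = 2,…,n−1. Then for each i the equation Σ_{m=1}^{n−1} c_{i,m} y^{m−1} = 1 has a unique positive real solution p_{i+}, the healthy state 0 is locally asymptotically stable, and every trajectory with x(0) ∈ [0,1]^n and max_i |x_i(0)| < min_i p_{i+} converges to 0. -/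
open Finset Filter

/-- The coefficients of STATEMENT 19: `c_{i,1} = Σ_j |(I − hD + hB)_{ij}|` and
`c_{i,m} = h Σ_{i₁,…,i_m} β_{i i₁ … i_m}` for `m ≥ 2` (the order-`(m+1)` array). -/
noncomputable def cc {n : ℕ} (h : ℝ) (δ : Fin n → ℝ) (B : Matrix (Fin n) (Fin n) ℝ)
    (T : (k : ℕ) → Fin n → (Fin (k - 1) → Fin n) → ℝ) (i : Fin n) (m : ℕ) : ℝ :=
  if m = 1 then ∑ j, |((1 : Matrix (Fin n) (Fin n) ℝ) - h • Matrix.diagonal δ + h • B) i j|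
  else h * ∑ v : Fin m → Fin n, T (m + 1) i v

private lemma mem1 {n : ℕ} (hn : 3 ≤ n) : (1:ℕ) ∈ Finset.Icc 1 (n-1) := by
  simp only [Finset.mem_Icc]; omega

private lemma mem2 {n : ℕ} (hn : 3 ≤ n) : (2:ℕ) ∈ Finset.Icc 1 (n-1) := by
  simp only [Finset.mem_Icc]; omega

/-- Auxiliary: the polynomial `g_i(r) = Σ_{m=1}^{n-1} c_{i,m} r^{m-1}`. -/
noncomputable def gg {n : ℕ} (h : ℝ) (δ : Fin n → ℝ) (B : Matrix (Fin n) (Fin n) ℝ)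
    (T : (k : ℕ) → Fin n → (Fin (k - 1) → Fin n) → ℝ) (i : Fin n) (r : ℝ) : ℝ :=
  ∑ m ∈ Finset.Icc 1 (n - 1), cc h δ B T i m * r ^ (m - 1)

lemma cc_nonneg {n : ℕ} (hn : 3 ≤ n) {h : ℝ} (hh : 0 ≤ h) (δ : Fin n → ℝ)
    (B : Matrix (Fin n) (Fin n) ℝ) (T : (k : ℕ) → Fin n → (Fin (k - 1) → Fin n) → ℝ)
    (hT : ∀ k ∈ Finset.Icc 3 n, ∀ i, ∀ v : Fin (k - 1) → Fin n, 0 ≤ T k i v)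
    (i : Fin n) {m : ℕ} (hm : m ∈ Finset.Icc 1 (n-1)) : 0 ≤ cc h δ B T i m := by
  simp only [Finset.mem_Icc] at hm
  unfold cc
  split
  · positivity
  · refine mul_nonneg hh (Finset.sum_nonneg fun v _ => ?_)
    exact hT (m+1) (by simp only [Finset.mem_Icc]; omega) i v

lemma cc_one_eq {n : ℕ} {h : ℝ} (hh : 0 ≤ h) (δ : Fin n → ℝ)
    (B : Matrix (Fin n) (Fin n) ℝ) (T : (k : ℕ) → Fin n → (Fin (k - 1) → Fin n) → ℝ)
    (i : Fin n) (hδ1 : h * δ i ≤ 1) (hBi : ∀ j, 0 ≤ B i j) :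
    cc h δ B T i 1 = 1 - h * δ i + h * ∑ j, B i j := by
  unfold cc
  rw [if_pos rfl]
  have key : ∀ j, |((1 : Matrix (Fin n) (Fin n) ℝ) - h • Matrix.diagonal δ + h • B) i j|
      = (if j = i then 1 - h * δ i else 0) + h * B i j := by
    intro j
    by_cases hij : j = i
    · subst hij
      simp only [Matrix.add_apply, Matrix.sub_apply, Matrix.smul_apply,
        Matrix.one_apply_eq, Matrix.diagonal_apply_eq, smul_eq_mul, if_true]
      rw [abs_of_nonneg (by nlinarith [hBi j])]
    · simp only [Matrix.add_apply, Matrix.sub_apply, Matrix.smul_apply,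
        Matrix.one_apply_ne (Ne.symm hij), Matrix.diagonal_apply_ne' _ hij, smul_eq_mul,
        if_neg hij, mul_zero, sub_zero, zero_add, zero_sub]
      rw [abs_of_nonneg (mul_nonneg hh (hBi j))]
  rw [Finset.sum_congr rfl fun j _ => key j, Finset.sum_add_distrib,
    Finset.sum_ite_eq' Finset.univ i (fun _ => 1 - h * δ i), if_pos (Finset.mem_univ i),
    ← Finset.mul_sum]

lemma cc_one_lt {n : ℕ} {h : ℝ} (hh : 0 < h) (δ : Fin n → ℝ)
    (B : Matrix (Fin n) (Fin n) ℝ) (T : (k : ℕ) → Fin n → (Fin (k - 1) → Fin n) → ℝ)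
    (i : Fin n) (hδ1 : h * δ i ≤ 1) (hBi : ∀ j, 0 ≤ B i j)
    (hdi : (∑ j, B i j) < δ i) : cc h δ B T i 1 < 1 := by
  rw [cc_one_eq hh.le δ B T i hδ1 hBi]
  nlinarith

lemma cc_two_pos {n : ℕ} (hn : 3 ≤ n) {h : ℝ} (hh : 0 < h) (δ : Fin n → ℝ)
    (B : Matrix (Fin n) (Fin n) ℝ) (T : (k : ℕ) → Fin n → (Fin (k - 1) → Fin n) → ℝ)
    (hT : ∀ k ∈ Finset.Icc 3 n, ∀ i, ∀ v : Fin (k - 1) → Fin n, 0 ≤ T k i v)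
    (hirr3 : TensIrredK 3 (T 3)) (i : Fin n) : 0 < cc h δ B T i 2 := by
  have h3 : (3:ℕ) ∈ Finset.Icc 3 n := by simp only [Finset.mem_Icc]; omega
  obtain ⟨i', hi', v, hv, hne⟩ := hirr3 {i} ⟨i, rfl⟩ (by
    intro habs
    have h2 : (⟨0, by omega⟩ : Fin n) ∈ ({i} : Set (Fin n)) := habs ▸ Set.mem_univ _
    have h3' : (⟨1, by omega⟩ : Fin n) ∈ ({i} : Set (Fin n)) := habs ▸ Set.mem_univ _
    rw [Set.mem_singleton_iff] at h2 h3'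
    exact absurd (h2.trans h3'.symm) (by simp [Fin.ext_iff]))
  rw [Set.mem_singleton_iff] at hi'
  subst hi'
  unfold cc
  rw [if_neg (by omega)]
  refine mul_pos hh (Finset.sum_pos' (fun w _ => hT 3 h3 i' w) ⟨v, Finset.mem_univ v, ?_⟩)
  exact lt_of_le_of_ne (hT 3 h3 i' v) (Ne.symm hne)

lemma gg_strictMonoOn {n : ℕ} (hn : 3 ≤ n) {h : ℝ} (δ : Fin n → ℝ)
    (B : Matrix (Fin n) (Fin n) ℝ) (T : (k : ℕ) → Fin n → (Fin (k - 1) → Fin n) → ℝ)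
    (i : Fin n) (hc2 : 0 < cc h δ B T i 2)
    (hcn : ∀ m ∈ Finset.Icc 1 (n-1), 0 ≤ cc h δ B T i m) :
    StrictMonoOn (gg h δ B T i) (Set.Ici (0:ℝ)) := by
  intro a ha b hb hab
  unfold gg
  refine Finset.sum_lt_sum (fun m hm => ?_) ⟨2, mem2 hn, ?_⟩
  · exact mul_le_mul_of_nonneg_left (pow_le_pow_left₀ ha hab.le _) (hcn m hm)
  · simpa using (mul_lt_mul_of_pos_left hab hc2)

lemma gg_nonneg {n : ℕ} (hn : 3 ≤ n) {h : ℝ} (δ : Fin n → ℝ)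
    (B : Matrix (Fin n) (Fin n) ℝ) (T : (k : ℕ) → Fin n → (Fin (k - 1) → Fin n) → ℝ)
    (i : Fin n) (hcn : ∀ m ∈ Finset.Icc 1 (n-1), 0 ≤ cc h δ B T i m)
    {r : ℝ} (hr : 0 ≤ r) : 0 ≤ gg h δ B T i r :=
  Finset.sum_nonneg fun m hm => mul_nonneg (hcn m hm) (pow_nonneg hr _)

lemma gg_zero {n : ℕ} (hn : 3 ≤ n) {h : ℝ} (δ : Fin n → ℝ)
    (B : Matrix (Fin n) (Fin n) ℝ) (T : (k : ℕ) → Fin n → (Fin (k - 1) → Fin n) → ℝ)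
    (i : Fin n) : gg h δ B T i 0 = cc h δ B T i 1 := by
  unfold gg
  rw [Finset.sum_eq_single 1]
  · simp
  · intro m hm hne
    simp only [Finset.mem_Icc] at hm
    rw [zero_pow (by omega), mul_zero]
  · intro habs; exact absurd (mem1 hn) habs

lemma gg_root {n : ℕ} (hn : 3 ≤ n) {h : ℝ} (hh : 0 < h) (δ : Fin n → ℝ)
    (B : Matrix (Fin n) (Fin n) ℝ) (T : (k : ℕ) → Fin n → (Fin (k - 1) → Fin n) → ℝ)
    (i : Fin n) (hc1 : cc h δ B T i 1 < 1) (hc2 : 0 < cc h δ B T i 2)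
    (hcn : ∀ m ∈ Finset.Icc 1 (n-1), 0 ≤ cc h δ B T i m) :
    ∃! y : ℝ, 0 < y ∧ gg h δ B T i y = 1 := by
  have hcont : Continuous (gg h δ B T i) := by
    unfold gg
    exact continuous_finset_sum _ fun m _ => (continuous_const.mul (continuous_pow _))
  set Y : ℝ := 2 / cc h δ B T i 2 with hY
  have hY0 : 0 < Y := by positivity
  have hgY : 1 < gg h δ B T i Y := by
    have hle : cc h δ B T i 2 * Y ^ (2-1) ≤ gg h δ B T i Y := by
      unfold gg
      exact Finset.single_le_sum (f := fun m => cc h δ B T i m * Y ^ (m-1))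
        (fun m hm => mul_nonneg (hcn m hm) (pow_nonneg hY0.le _)) (mem2 hn)
    have : cc h δ B T i 2 * Y ^ (2-1) = 2 := by
      rw [hY, show (2:ℕ) - 1 = 1 from rfl, pow_one]; field_simp [hc2.ne']
    linarith
  have hg0 : gg h δ B T i 0 < 1 := by rw [gg_zero hn δ B T i]; exact hc1
  have hmono := gg_strictMonoOn hn δ B T i hc2 hcn
  obtain ⟨y, hy, hyeq⟩ := intermediate_value_Ioo hY0.le hcont.continuousOn
    (Set.mem_Ioo.mpr ⟨hg0, hgY⟩)
  refine ⟨y, ⟨hy.1, hyeq⟩, fun z hz => ?_⟩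
  exact hmono.injOn (Set.mem_Ici.mpr hz.1.le) (Set.mem_Ici.mpr hy.1.le)
    (hz.2.trans hyeq.symm)


lemma step_bound {n : ℕ} (hn : 3 ≤ n) {h : ℝ} (hh : 0 < h) (δ : Fin n → ℝ)
    (B : Matrix (Fin n) (Fin n) ℝ) (T : (k : ℕ) → Fin n → (Fin (k - 1) → Fin n) → ℝ)
    (hδ : ∀ i, 0 < δ i) (hB : ∀ i j, 0 ≤ B i j)
    (hT : ∀ k ∈ Finset.Icc 3 n, ∀ i, ∀ v : Fin (k - 1) → Fin n, 0 ≤ T k i v)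
    (hA7a : ∀ i, h * δ i ≤ 1 ∧
      h * ((∑ j, B i j) + ∑ k ∈ Finset.Icc 3 n, ∑ v : Fin (k - 1) → Fin n, T k i v) ≤ 1)
    (y : Fin n → ℝ) (hy : InCube y) :
    InCube (hoSIS h δ B T y) ∧
      ∀ i, hoSIS h δ B T y i ≤ ∑ m ∈ Finset.Icc 1 (n-1), cc h δ B T i m * ‖y‖ ^ m := by
  set r := ‖y‖ with hr
  have hr0 : (0:ℝ) ≤ r := norm_nonneg y
  have hyr : ∀ j, y j ≤ r := by
    intro j
    have := norm_le_pi_norm y j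
    rw [Real.norm_eq_abs] at this
    exact (abs_le.mp this).2
  have hy0 : ∀ j, 0 ≤ y j := fun j => (hy j).1
  have hy1 : ∀ j, y j ≤ 1 := fun j => (hy j).2
  have key : ∀ i, 0 ≤ hoSIS h δ B T y i ∧ hoSIS h δ B T y i ≤ 1 ∧
      hoSIS h δ B T y i ≤ ∑ m ∈ Finset.Icc 1 (n-1), cc h δ B T i m * r ^ m := by
    intro i
    set A := ∑ j, B i j * y j with hA
    set C := ∑ k ∈ Finset.Icc 3 n, ∑ v : Fin (k-1) → Fin n, T k i v * ∏ m, y (v m) with hC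
    have hA0 : 0 ≤ A := Finset.sum_nonneg fun j _ => mul_nonneg (hB i j) (hy0 j)
    have hC0 : 0 ≤ C := by
      refine Finset.sum_nonneg fun k hk => Finset.sum_nonneg fun v _ => ?_
      exact mul_nonneg (hT k hk i v) (Finset.prod_nonneg fun m _ => hy0 _)
    have hA1 : A ≤ ∑ j, B i j :=
      Finset.sum_le_sum fun j _ => by
        nlinarith [hB i j, hy1 j]
    have hC1 : C ≤ ∑ k ∈ Finset.Icc 3 n, ∑ v : Fin (k-1) → Fin n, T k i v := by
      refine Finset.sum_le_sum fun k hk => Finset.sum_le_sum fun v _ => ?_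
      have hprod : ∏ m, y (v m) ≤ 1 := by
        calc ∏ m, y (v m) ≤ ∏ _m : Fin (k-1), (1:ℝ) :=
              Finset.prod_le_prod (fun m _ => hy0 _) (fun m _ => hy1 _)
          _ = 1 := by simp
      nlinarith [hT k hk i v]
    have hAr : A ≤ (∑ j, B i j) * r := by
      rw [Finset.sum_mul]
      exact Finset.sum_le_sum fun j _ => mul_le_mul_of_nonneg_left (hyr j) (hB i j)
    have hCr : C ≤ ∑ k ∈ Finset.Icc 3 n, (∑ v : Fin (k-1) → Fin n, T k i v) * r ^ (k-1) := by
      refine Finset.sum_le_sum fun k hk => ?_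
      rw [Finset.sum_mul]
      refine Finset.sum_le_sum fun v _ => ?_
      refine mul_le_mul_of_nonneg_left ?_ (hT k hk i v)
      calc ∏ m, y (v m) ≤ ∏ _m : Fin (k-1), r :=
            Finset.prod_le_prod (fun m _ => hy0 _) (fun m _ => hyr _)
        _ = r ^ (k-1) := by simp
    have e : hoSIS h δ B T y i
        = (1 - h * δ i) * y i + h * (1 - y i) * (A + C) := by
      unfold hoSIS
      rw [← hA, ← hC]
      ring
    have h1mδ : 0 ≤ 1 - h * δ i := by linarith [(hA7a i).1]
    have hsumle : h * (A + C) ≤ 1 := by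
      have h2 := (hA7a i).2
      nlinarith
    constructor
    · rw [e]
      have := mul_nonneg (mul_nonneg hh.le (by linarith [hy1 i] : (0:ℝ) ≤ 1 - y i))
        (add_nonneg hA0 hC0)
      nlinarith [mul_nonneg h1mδ (hy0 i)]
    constructor
    · rw [e]
      nlinarith [mul_nonneg hh.le (mul_nonneg (hy0 i) (add_nonneg hA0 hC0)),
        mul_nonneg (mul_nonneg hh.le (hδ i).le) (hy0 i), hy1 i,
        mul_le_mul_of_nonneg_left hsumle (by linarith [hy1 i] : (0:ℝ) ≤ 1 - y i)]
    · -- upper bound by the polynomial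
      have step1 : hoSIS h δ B T y i ≤ (1 - h * δ i) * r
          + h * ((∑ j, B i j) * r + ∑ k ∈ Finset.Icc 3 n,
              (∑ v : Fin (k-1) → Fin n, T k i v) * r ^ (k-1)) := by
        rw [e]
        have t1 : (1 - h * δ i) * y i ≤ (1 - h * δ i) * r :=
          mul_le_mul_of_nonneg_left (hyr i) h1mδ
        have t2 : h * (1 - y i) * (A + C) ≤ h * (A + C) := by
          nlinarith [mul_nonneg (mul_nonneg hh.le (hy0 i)) (add_nonneg hA0 hC0)]
        have t3 : h * (A + C) ≤ h * ((∑ j, B i j) * r + ∑ k ∈ Finset.Icc 3 n,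
            (∑ v : Fin (k-1) → Fin n, T k i v) * r ^ (k-1)) :=
          mul_le_mul_of_nonneg_left (add_le_add hAr hCr) hh.le
        linarith
      refine step1.trans (le_of_eq ?_)
      -- rewrite RHS as the cc-polynomial
      have hins : Finset.Icc 1 (n-1) = insert 1 (Finset.Icc 2 (n-1)) := by
        ext m; simp only [Finset.mem_Icc, Finset.mem_insert]; omega
      have hmap : Finset.Icc 3 n
          = Finset.map ⟨fun m => m + 1, fun a b hab => by simpa using hab⟩ (Finset.Icc 2 (n-1)) := by
        ext k
        simp only [Finset.mem_Icc, Finset.mem_map, Function.Embedding.coeFn_mk]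
        constructor
        · intro hk; exact ⟨k - 1, by omega, by show k - 1 + 1 = k; omega⟩
        · rintro ⟨m, hm, rfl⟩; show 3 ≤ m + 1 ∧ m + 1 ≤ n; omega
      have htail : ∑ k ∈ Finset.Icc 3 n, (∑ v : Fin (k-1) → Fin n, T k i v) * r ^ (k-1)
          = ∑ m ∈ Finset.Icc 2 (n-1), (∑ v : Fin m → Fin n, T (m+1) i v) * r ^ m := by
        rw [hmap, Finset.sum_map]
        rfl
      have hcc2 : ∑ m ∈ Finset.Icc 2 (n-1), cc h δ B T i m * r ^ m
          = ∑ m ∈ Finset.Icc 2 (n-1), h * ((∑ v : Fin m → Fin n, T (m+1) i v) * r ^ m) := by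
        refine Finset.sum_congr rfl fun m hm => ?_
        have hm1 : m ≠ 1 := by simp only [Finset.mem_Icc] at hm; omega
        unfold cc
        rw [if_neg hm1]
        ring
      calc (1 - h * δ i) * r + h * ((∑ j, B i j) * r + ∑ k ∈ Finset.Icc 3 n,
              (∑ v : Fin (k-1) → Fin n, T k i v) * r ^ (k-1))
          = (1 - h * δ i + h * ∑ j, B i j) * r ^ 1
            + ∑ m ∈ Finset.Icc 2 (n-1), h * ((∑ v : Fin m → Fin n, T (m+1) i v) * r ^ m) := by
            rw [htail, mul_add, Finset.mul_sum]
            ring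
        _ = ∑ m ∈ Finset.Icc 1 (n-1), cc h δ B T i m * r ^ m := by
            rw [hins, Finset.sum_insert (by simp only [Finset.mem_Icc]; omega), hcc2,
              cc_one_eq hh.le δ B T i (hA7a i).1 (fun j => hB i j)]
  refine ⟨fun i => ⟨(key i).1, (key i).2.1⟩, fun i => (key i).2.2⟩

lemma traj_decay {n : ℕ} (hn : 3 ≤ n) {h : ℝ} (hh : 0 < h) (δ : Fin n → ℝ)
    (B : Matrix (Fin n) (Fin n) ℝ) (T : (k : ℕ) → Fin n → (Fin (k - 1) → Fin n) → ℝ)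
    (hδ : ∀ i, 0 < δ i) (hB : ∀ i j, 0 ≤ B i j)
    (hT : ∀ k ∈ Finset.Icc 3 n, ∀ i, ∀ v : Fin (k - 1) → Fin n, 0 ≤ T k i v)
    (hA7a : ∀ i, h * δ i ≤ 1 ∧
      h * ((∑ j, B i j) + ∑ k ∈ Finset.Icc 3 n, ∑ v : Fin (k - 1) → Fin n, T k i v) ≤ 1)
    (x : ℕ → Fin n → ℝ) (htraj : IsTraj (hoSIS h δ B T) x) (hc0 : InCube (x 0))
    (κ : ℝ) (hκ0 : 0 ≤ κ) (hκ1 : κ ≤ 1)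
    (hκg : ∀ i, gg h δ B T i ‖x 0‖ ≤ κ) :
    ∀ t, InCube (x t) ∧ ‖x t‖ ≤ κ ^ t * ‖x 0‖ := by
  have hr00 : (0:ℝ) ≤ ‖x 0‖ := norm_nonneg _
  intro t
  induction t with
  | zero => exact ⟨hc0, by simp⟩
  | succ t ih =>
    obtain ⟨hcube, hnorm⟩ := ih
    have hxt : x (t+1) = hoSIS h δ B T (x t) := htraj t
    have hstep := step_bound hn hh δ B T hδ hB hT hA7a (x t) hcube
    have hcube' : InCube (x (t+1)) := hxt ▸ hstep.1
    refine ⟨hcube', ?_⟩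
    have hrt0 : (0:ℝ) ≤ ‖x t‖ := norm_nonneg _
    have hrtr0 : ‖x t‖ ≤ ‖x 0‖ := by
      calc ‖x t‖ ≤ κ ^ t * ‖x 0‖ := hnorm
        _ ≤ 1 * ‖x 0‖ := mul_le_mul_of_nonneg_right (pow_le_one₀ hκ0 hκ1) hr00
        _ = ‖x 0‖ := one_mul _
    have hcomp : ∀ i, x (t+1) i ≤ κ * ‖x t‖ := by
      intro i
      have h1 := hxt ▸ hstep.2 i
      have h2 : ∑ m ∈ Finset.Icc 1 (n-1), cc h δ B T i m * ‖x t‖ ^ m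
          ≤ gg h δ B T i ‖x 0‖ * ‖x t‖ := by
        unfold gg
        rw [Finset.sum_mul]
        refine Finset.sum_le_sum fun m hm => ?_
        have hm1 : 1 ≤ m := by simp only [Finset.mem_Icc] at hm; omega
        have hpow : ‖x t‖ ^ m = ‖x t‖ ^ (m-1) * ‖x t‖ := by
          rw [← pow_succ]; congr 1; omega
        rw [hpow, ← mul_assoc]
        refine mul_le_mul_of_nonneg_right ?_ hrt0
        exact mul_le_mul_of_nonneg_left (pow_le_pow_left₀ hrt0 hrtr0 _)
          (cc_nonneg hn hh.le δ B T hT i hm)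
      have h3 : gg h δ B T i ‖x 0‖ * ‖x t‖ ≤ κ * ‖x t‖ :=
        mul_le_mul_of_nonneg_right (hκg i) hrt0
      linarith
    have : ‖x (t+1)‖ ≤ κ * ‖x t‖ := by
      refine (pi_norm_le_iff_of_nonneg (mul_nonneg hκ0 hrt0)).mpr fun i => ?_
      rw [Real.norm_eq_abs, abs_of_nonneg (hcube' i).1]
      exact hcomp i
    calc ‖x (t+1)‖ ≤ κ * ‖x t‖ := this
      _ ≤ κ * (κ ^ t * ‖x 0‖) := mul_le_mul_of_nonneg_left hnorm hκ0
      _ = κ ^ (t+1) * ‖x 0‖ := by ring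

/-- with all arrays `F_k` irreducible and `δ_i > Σ_j β_{ij}` for all `i`,
for each `i` the equation `Σ_{m=1}^{n−1} c_{i,m} y^{m−1} = 1` has a unique positive
solution `p_{i+}`, the healthy state is locally asymptotically stable, and every
trajectory starting in `[0,1]^n` with `max_i |x_i(0)| < min_i p_{i+}` converges to `0`. -/
theorem stmt19 {n : ℕ} (hn : 3 ≤ n) (h : ℝ) (hh : 0 < h)
    (δ : Fin n → ℝ) (B : Matrix (Fin n) (Fin n) ℝ)
    (T : (k : ℕ) → Fin n → (Fin (k - 1) → Fin n) → ℝ)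
    (hδ : ∀ i, 0 < δ i) (hB : ∀ i j, 0 ≤ B i j)
    (hT : ∀ k ∈ Finset.Icc 3 n, ∀ i, ∀ v : Fin (k - 1) → Fin n, 0 ≤ T k i v)
    (hA2 : MatIrred B)
    (hA7a : ∀ i, h * δ i ≤ 1 ∧
      h * ((∑ j, B i j) + ∑ k ∈ Finset.Icc 3 n, ∑ v : Fin (k - 1) → Fin n, T k i v) ≤ 1)
    (hTirr : ∀ k ∈ Finset.Icc 3 n, TensIrredK k (T k))
    (hd : ∀ i, (∑ j, B i j) < δ i) :
    (∀ i, ∃! y : ℝ, 0 < y ∧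
      ∑ m ∈ Finset.Icc 1 (n - 1), cc h δ B T i m * y ^ (m - 1) = 1) ∧
    LocAsympStable (hoSIS h δ B T) 0 ∧
    ∀ p : Fin n → ℝ,
      (∀ i, 0 < p i ∧ ∑ m ∈ Finset.Icc 1 (n - 1), cc h δ B T i m * p i ^ (m - 1) = 1) →
      ∀ x : ℕ → Fin n → ℝ, IsTraj (hoSIS h δ B T) x → InCube (x 0) →
        ‖x 0‖ < (⨅ i, p i) → Tendsto x atTop (nhds 0) := by
  haveI : Nonempty (Fin n) := ⟨⟨0, by omega⟩⟩
  have h3mem : (3:ℕ) ∈ Finset.Icc 3 n := by simp only [Finset.mem_Icc]; omega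
  have hcn : ∀ i, ∀ m ∈ Finset.Icc 1 (n-1), 0 ≤ cc h δ B T i m :=
    fun i m hm => cc_nonneg hn hh.le δ B T hT i hm
  have hc2 : ∀ i, 0 < cc h δ B T i 2 :=
    fun i => cc_two_pos hn hh δ B T hT (hTirr 3 h3mem) i
  have hc1 : ∀ i, cc h δ B T i 1 < 1 :=
    fun i => cc_one_lt hh δ B T i (hA7a i).1 (fun j => hB i j) (hd i)
  have part1 : ∀ i, ∃! y : ℝ, 0 < y ∧
      ∑ m ∈ Finset.Icc 1 (n-1), cc h δ B T i m * y ^ (m-1) = 1 :=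
    fun i => gg_root hn hh δ B T i (hc1 i) (hc2 i) (hcn i)
  have core : ∀ x : ℕ → Fin n → ℝ, IsTraj (hoSIS h δ B T) x → InCube (x 0) →
      (∀ i, gg h δ B T i ‖x 0‖ < 1) →
      (∀ t, ‖x t‖ ≤ ‖x 0‖) ∧ Tendsto x atTop (nhds 0) := by
    intro x htraj hc0 hlt
    obtain ⟨i₁, -, hmax⟩ := Finset.exists_max_image Finset.univ
      (fun i => gg h δ B T i ‖x 0‖) Finset.univ_nonempty
    set κ := gg h δ B T i₁ ‖x 0‖ with hκ
    have hκ0 : 0 ≤ κ := gg_nonneg hn δ B T i₁ (hcn i₁) (norm_nonneg _)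
    have hκ1 : κ < 1 := hlt i₁
    have hκg : ∀ i, gg h δ B T i ‖x 0‖ ≤ κ := fun i => hmax i (Finset.mem_univ i)
    have hdec := traj_decay hn hh δ B T hδ hB hT hA7a x htraj hc0 κ hκ0 hκ1.le hκg
    constructor
    · intro t
      calc ‖x t‖ ≤ κ ^ t * ‖x 0‖ := (hdec t).2
        _ ≤ 1 * ‖x 0‖ := mul_le_mul_of_nonneg_right (pow_le_one₀ hκ0 hκ1.le) (norm_nonneg _)
        _ = ‖x 0‖ := one_mul _
    · rw [tendsto_zero_iff_norm_tendsto_zero]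
      refine squeeze_zero (fun t => norm_nonneg _) (fun t => (hdec t).2) ?_
      simpa using (tendsto_pow_atTop_nhds_zero_of_lt_one hκ0 hκ1).mul_const ‖x 0‖
  choose p hp using fun i => (part1 i).exists
  obtain ⟨i₀, -, hmin⟩ := Finset.exists_min_image Finset.univ p Finset.univ_nonempty
  have hstab : LocAsympStable (hoSIS h δ B T) 0 := by
    intro ε hε
    refine ⟨min ε (p i₀), lt_min hε (hp i₀).1, ?_⟩
    intro x htraj hc0 hx0
    rw [sub_zero] at hx0
    have hlt : ∀ i, gg h δ B T i ‖x 0‖ < 1 := by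
      intro i
      have h1 : ‖x 0‖ < p i :=
        lt_of_lt_of_le (lt_of_lt_of_le hx0 (min_le_right _ _)) (hmin i (Finset.mem_univ i))
      have h2 := (gg_strictMonoOn hn δ B T i (hc2 i) (hcn i))
        (Set.mem_Ici.mpr (norm_nonneg _)) (Set.mem_Ici.mpr (hp i).1.le) h1
      have heq : gg h δ B T i (p i) = 1 := (hp i).2
      linarith
    obtain ⟨hbd, htend⟩ := core x htraj hc0 hlt
    constructor
    · intro t
      rw [sub_zero]
      exact lt_of_le_of_lt (hbd t) (lt_of_lt_of_le hx0 (min_le_left _ _))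
    · simpa using htend
  refine ⟨part1, hstab, ?_⟩
  intro q hq x htraj hc0 hx0
  have hlt : ∀ i, gg h δ B T i ‖x 0‖ < 1 := by
    intro i
    have h1 : ‖x 0‖ < q i :=
      lt_of_lt_of_le hx0 (ciInf_le (Finite.bddBelow_range q) i)
    have h2 := (gg_strictMonoOn hn δ B T i (hc2 i) (hcn i))
      (Set.mem_Ici.mpr (norm_nonneg _)) (Set.mem_Ici.mpr (hq i).1.le) h1
    have heq : gg h δ B T i (q i) = 1 := (hq i).2
    linarith
  exact (core x htraj hc0 hlt).2
end
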